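/- arXiv:1005.3225 — 4 statements merged into one kernel-verified Lean document; each statement's English description precedes it below -/
import Mathlib

section
/- Under subset pivotality, the maxT procedure has strong control of the family-wise error rate: for every threshold u ∈ ℝ, P(∃ k ∈ M_0 : T_k > u) ≤ P₀(max_{k∈M} T⁰_k > u). -/
open MeasureTheory

/-- Strong control of the maxT procedure under subset pivotality.  Let
`(T k)_{k ∈ M}` be the test statistics under the true distribution `P`, with
`M₀` the set of true null hypotheses, and `(T₀ k)_{k ∈ M}` statistics
distributed according to the global null (under `P₀`).  Subset pivotality
states that the joint law of `(T k)_{k ∈ M₀}` under `P` equals that of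
`(T₀ k)_{k ∈ M₀}` under `P₀`.  Then for every threshold `u`,
`P(∃ k ∈ M₀, T k > u) ≤ P₀(max_{k ∈ M} T₀ k > u)`. -/
theorem maxT_strong_FWER_control
    {Ω Ω₀ : Type*} [MeasurableSpace Ω] [MeasurableSpace Ω₀]
    (P : Measure Ω) [IsProbabilityMeasure P]
    (P₀ : Measure Ω₀) [IsProbabilityMeasure P₀]
    {ι : Type*} [Fintype ι] (M₀ : Finset ι)
    (T : ι → Ω → ℝ) (T₀ : ι → Ω₀ → ℝ)
    (hT : ∀ k, Measurable (T k)) (hT₀ : ∀ k, Measurable (T₀ k))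
    (hpivot : Measure.map (fun ω (k : M₀) => T k ω) P
      = Measure.map (fun ω (k : M₀) => T₀ k ω) P₀) :
    ∀ u : ℝ, P {ω | ∃ k ∈ M₀, T k ω > u} ≤ P₀ {ω | ∃ k : ι, T₀ k ω > u} := by
  intro u
  set S : Set (M₀ → ℝ) := {f | ∃ k : M₀, f k > u} with hS
  have hSm : MeasurableSet S := by
    have : S = ⋃ k : M₀, {f : M₀ → ℝ | f k > u} := by
      ext f; simp [hS]
    rw [this]
    exact MeasurableSet.iUnion fun k =>
      measurableSet_lt measurable_const (measurable_pi_apply k)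
  have hf : Measurable (fun ω (k : M₀) => T k ω) :=
    measurable_pi_lambda _ fun k => hT k
  have hf₀ : Measurable (fun ω (k : M₀) => T₀ k ω) :=
    measurable_pi_lambda _ fun k => hT₀ k
  have h1 : {ω | ∃ k ∈ M₀, T k ω > u} = (fun ω (k : M₀) => T k ω) ⁻¹' S := by
    ext ω; simp [hS]
  have h2 : (fun ω (k : M₀) => T₀ k ω) ⁻¹' S ⊆ {ω | ∃ k : ι, T₀ k ω > u} := by
    rintro ω ⟨k, hk⟩; exact ⟨k, hk⟩
  calc P {ω | ∃ k ∈ M₀, T k ω > u}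
      = Measure.map (fun ω (k : M₀) => T k ω) P S := by
        rw [Measure.map_apply hf hSm, h1]
    _ = Measure.map (fun ω (k : M₀) => T₀ k ω) P₀ S := by rw [hpivot]
    _ = P₀ ((fun ω (k : M₀) => T₀ k ω) ⁻¹' S) := Measure.map_apply hf₀ hSm
    _ ≤ _ := measure_mono h2
end

section
/- Under subset pivotality, the maximum-cluster-size test has strong control of the family-wise error rate: for every threshold u ∈ ℝ and every critical size N, the probability of falsely detecting a cluster satisfies P(∃ a cluster C of (T_k) at threshold u with C ⊆ M_0 and |C| > N) ≤ P₀(∃ a cluster C of (T⁰_k) at threshold u with |C| > N). -/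
open MeasureTheory

/-- `C` is a cluster of the excursion set `A` in the graph `G`: `C` is the
vertex set of a connected component of the subgraph of `G` induced by `A`. -/
def IsCluster {ι : Type*} (G : SimpleGraph ι) (A : Set ι) (C : Set ι) : Prop :=
  ∃ v : A, C = {w : ι | ∃ hw : w ∈ A, (G.induce A).Reachable v ⟨w, hw⟩}

private lemma walk_transfer {ι : Type*} (G : SimpleGraph ι) {A B : Set ι} {v : A}
    (hC : ∀ x : A, (G.induce A).Reachable v x → ↑x ∈ B) :
    ∀ {a b : A} (p : (G.induce A).Walk a b) (hva : (G.induce A).Reachable v a),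
      (G.induce B).Reachable ⟨a, hC a hva⟩ ⟨b, hC b (hva.trans p.reachable)⟩ := by
  intro a b p
  induction p with
  | nil => intro hva; exact SimpleGraph.Reachable.refl _
  | @cons a c b h q ih =>
    intro hva
    have hadj : (G.induce B).Adj ⟨a, hC a hva⟩ ⟨c, hC c (hva.trans h.reachable)⟩ := by
      simpa using h
    exact hadj.reachable.trans (ih (hva.trans h.reachable))

private lemma cluster_subset {ι : Type*} {G : SimpleGraph ι} {A C : Set ι}
    (h : IsCluster G A C) : C ⊆ A := by
  obtain ⟨v, rfl⟩ := h
  rintro x ⟨hx, -⟩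
  exact hx

private lemma cluster_mono {ι : Type*} (G : SimpleGraph ι) {A B C : Set ι}
    (h : IsCluster G A C) (hCB : C ⊆ B) : ∃ C', IsCluster G B C' ∧ C ⊆ C' := by
  obtain ⟨v, rfl⟩ := h
  have hmem : ∀ x : A, (G.induce A).Reachable v x → ↑x ∈ B := fun x hx => hCB ⟨x.2, hx⟩
  have hvB : (v : ι) ∈ B := hmem v (SimpleGraph.Reachable.refl v)
  refine ⟨_, ⟨⟨v, hvB⟩, rfl⟩, ?_⟩
  rintro x ⟨hx, hr⟩
  obtain ⟨p⟩ := id hr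
  exact ⟨hmem ⟨x, hx⟩ hr, walk_transfer G hmem p (SimpleGraph.Reachable.refl v)⟩

/-- Strong control of the maximum-cluster-size test under subset pivotality.
Let `(T k)` be the statistics under the true distribution `P`, with `M₀` the
set of voxels where the null is true, and `(T₀ k)` statistics distributed
according to the global null (under `P₀`), with the joint law of `(T k)_{k∈M₀}`
under `P` equal to that of `(T₀ k)_{k∈M₀}` under `P₀` (subset pivotality).
Then for every threshold `u` and critical size `N`, the probability of
detecting a cluster entirely made of null voxels of size exceeding `N` is
bounded by the global-null probability of some cluster of size exceeding `N`. -/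
theorem maxClusterSize_strong_FWER_control
    {Ω Ω₀ : Type*} [MeasurableSpace Ω] [MeasurableSpace Ω₀]
    (P : Measure Ω) [IsProbabilityMeasure P]
    (P₀ : Measure Ω₀) [IsProbabilityMeasure P₀]
    {ι : Type*} [Fintype ι] (G : SimpleGraph ι) (M₀ : Finset ι)
    (T : ι → Ω → ℝ) (T₀ : ι → Ω₀ → ℝ)
    (hT : ∀ k, Measurable (T k)) (hT₀ : ∀ k, Measurable (T₀ k))
    (hpivot : Measure.map (fun ω (k : M₀) => T k ω) P
      = Measure.map (fun ω (k : M₀) => T₀ k ω) P₀) :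
    ∀ (u : ℝ) (N : ℕ),
      P {ω | ∃ C : Set ι, IsCluster G {k | T k ω > u} C ∧ C ⊆ ↑M₀ ∧ N < C.ncard}
        ≤ P₀ {ω | ∃ C : Set ι, IsCluster G {k | T₀ k ω > u} C ∧ N < C.ncard} := by
  intro u N
  set φ : Ω → (M₀ → ℝ) := fun ω (k : M₀) => T k ω with hφdef
  set φ₀ : Ω₀ → (M₀ → ℝ) := fun ω (k : M₀) => T₀ k ω with hφ₀def
  have hφ : Measurable φ := measurable_pi_lambda _ fun k => hT k
  have hφ₀ : Measurable φ₀ := measurable_pi_lambda _ fun k => hT₀ k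
  set S : Set (M₀ → ℝ) :=
    {f | ∃ C : Set ι, IsCluster G {k : ι | ∃ h : k ∈ M₀, f ⟨k, h⟩ > u} C ∧ N < C.ncard}
    with hSdef
  -- measurability of S
  have hSmeas : MeasurableSet S := by
    have hpiece : ∀ A : Set ι,
        MeasurableSet {f : M₀ → ℝ | {k : ι | ∃ h : k ∈ M₀, f ⟨k, h⟩ > u} = A} := by
      intro A
      have heq : {f : M₀ → ℝ | {k : ι | ∃ h : k ∈ M₀, f ⟨k, h⟩ > u} = A} =
          ⋂ k : ι, {f : M₀ → ℝ | (∃ h : k ∈ M₀, f ⟨k, h⟩ > u) ↔ k ∈ A} := by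
        ext f
        simp only [Set.mem_setOf_eq, Set.ext_iff, Set.mem_iInter, Set.mem_setOf_eq]
      rw [heq]
      refine MeasurableSet.iInter fun k => ?_
      by_cases hk : k ∈ M₀
      · by_cases hA : k ∈ A
        · have : {f : M₀ → ℝ | (∃ h : k ∈ M₀, f ⟨k, h⟩ > u) ↔ k ∈ A} =
              (fun f : M₀ → ℝ => f ⟨k, hk⟩) ⁻¹' (Set.Ioi u) := by
            ext f; simp [hk, hA]
          rw [this]; exact (measurable_pi_apply _) measurableSet_Ioi
        · have : {f : M₀ → ℝ | (∃ h : k ∈ M₀, f ⟨k, h⟩ > u) ↔ k ∈ A} =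
              ((fun f : M₀ → ℝ => f ⟨k, hk⟩) ⁻¹' (Set.Ioi u))ᶜ := by
            ext f; simp [hk, hA]
          rw [this]; exact ((measurable_pi_apply _) measurableSet_Ioi).compl
      · by_cases hA : k ∈ A
        · have : {f : M₀ → ℝ | (∃ h : k ∈ M₀, f ⟨k, h⟩ > u) ↔ k ∈ A} = ∅ := by
            ext f; simp [hk, hA]
          rw [this]; exact MeasurableSet.empty
        · have : {f : M₀ → ℝ | (∃ h : k ∈ M₀, f ⟨k, h⟩ > u) ↔ k ∈ A} = Set.univ := by
            ext f; simp [hk, hA]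
          rw [this]; exact MeasurableSet.univ
    have hS : S = ⋃ (A : Set ι) (_ : ∃ C : Set ι, IsCluster G A C ∧ N < C.ncard),
        {f : M₀ → ℝ | {k : ι | ∃ h : k ∈ M₀, f ⟨k, h⟩ > u} = A} := by
      ext f
      simp only [hSdef, Set.mem_setOf_eq, Set.mem_iUnion]
      constructor
      · rintro ⟨C, hC, hN⟩
        exact ⟨_, ⟨C, hC, hN⟩, rfl⟩
      · rintro ⟨A, ⟨C, hC, hN⟩, hEq⟩
        rw [hEq]; exact ⟨C, hC, hN⟩
    rw [hS]
    exact MeasurableSet.iUnion fun A => MeasurableSet.iUnion fun _ => hpiece A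
  have step1 : {ω | ∃ C : Set ι, IsCluster G {k | T k ω > u} C ∧ C ⊆ ↑M₀ ∧ N < C.ncard}
      ⊆ φ ⁻¹' S := by
    rintro ω ⟨C, hC, hCM, hN⟩
    have hCA : C ⊆ {k | T k ω > u} := cluster_subset hC
    have hCB : C ⊆ {k : ι | ∃ h : k ∈ M₀, φ ω ⟨k, h⟩ > u} := fun x hx =>
      ⟨hCM hx, hCA hx⟩
    obtain ⟨C', hC', hsub⟩ := cluster_mono G hC hCB
    exact ⟨C', hC', lt_of_lt_of_le hN (Set.ncard_le_ncard hsub (Set.toFinite _))⟩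
  have step2 : φ₀ ⁻¹' S
      ⊆ {ω | ∃ C : Set ι, IsCluster G {k | T₀ k ω > u} C ∧ N < C.ncard} := by
    rintro ω ⟨C, hC, hN⟩
    have hCB : C ⊆ {k | T₀ k ω > u} := fun x hx => (cluster_subset hC hx).2
    obtain ⟨C', hC', hsub⟩ := cluster_mono G hC hCB
    exact ⟨C', hC', lt_of_lt_of_le hN (Set.ncard_le_ncard hsub (Set.toFinite _))⟩
  calc P {ω | ∃ C : Set ι, IsCluster G {k | T k ω > u} C ∧ C ⊆ ↑M₀ ∧ N < C.ncard}
      ≤ P (φ ⁻¹' S) := measure_mono step1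
    _ = Measure.map φ P S := (Measure.map_apply hφ hSmeas).symm
    _ = Measure.map φ₀ P₀ S := by rw [hφdef, hφ₀def]; exact congrFun (congrArg _ hpivot) S
    _ = P₀ (φ₀ ⁻¹' S) := Measure.map_apply hφ₀ hSmeas
    _ ≤ P₀ _ := measure_mono step2
end

section
/- Any finite family of pairwise distinct Gaussian probability density functions on ℝ^m is linearly independent: if (μ_1, Σ_1), …, (μ_r, Σ_r) are pairwise distinct parameter pairs (means μ_i ∈ ℝ^m and symmetric positive definite m×m covariance matrices Σ_i, with (μ_i, Σ_i) ≠ (μ_j, Σ_j) for i ≠ j) and c_1, …, c_r ∈ ℝ satisfy Σ_{i=1}^{r} c_i · g_{μ_i,Σ_i}(x) = 0 for all x ∈ ℝ^m, then c_1 = … = c_r = 0. -/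
open Filter Real Matrix MvPolynomial

/-! ### Auxiliary lemmas -/

private lemma exp_quad_tendsto_zero {A B : ℝ} (h : A < 0 ∨ (A = 0 ∧ B < 0)) :
    Tendsto (fun t : ℝ => Real.exp (A * t ^ 2 + B * t)) atTop (nhds 0) := by
  have key : Tendsto (fun t : ℝ => A * t ^ 2 + B * t) atTop atBot := by
    rcases h with hA | ⟨hA, hB⟩
    · have h1 : Tendsto (fun t : ℝ => A * t + B) atTop atBot :=
        tendsto_atBot_add_const_right _ B ((tendsto_const_mul_atBot_of_neg hA).2 tendsto_id)
      have h2 : Tendsto (fun t : ℝ => t * (A * t + B)) atTop atBot :=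
        tendsto_id.atTop_mul_atBot₀ h1
      refine h2.congr fun t => by ring
    · have h1 : Tendsto (fun t : ℝ => B * t) atTop atBot :=
        (tendsto_const_mul_atBot_of_neg hB).2 tendsto_id
      refine h1.congr fun t => by rw [hA]; ring
  exact Real.tendsto_exp_atBot.comp key

/-- Linear independence of 1-dimensional exponentials of quadratics with
pairwise distinct coefficient pairs. -/
private lemma key1d (r : ℕ) (a b d : Fin r → ℝ)
    (hdist : ∀ i j : Fin r, i ≠ j → (a i, b i) ≠ (a j, b j))
    (h : ∀ t : ℝ, ∑ i, d i * Real.exp (a i * t ^ 2 + b i * t) = 0) :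
    ∀ i, d i = 0 := by
  by_contra hc
  push_neg at hc
  obtain ⟨j, hj⟩ := hc
  set s : Finset (Fin r) := Finset.univ.filter (fun i => d i ≠ 0) with hs
  have hsne : s.Nonempty := ⟨j, by simp [hs, hj]⟩
  obtain ⟨i0, hi0s, hi0max⟩ := s.exists_max_image (fun i => toLex (a i, b i)) hsne
  have hlt : ∀ i ∈ s, i ≠ i0 →
      a i < a i0 ∨ (a i = a i0 ∧ b i < b i0) := by
    intro i his hne
    have hle := hi0max i his
    have hne' : (a i, b i) ≠ (a i0, b i0) := hdist i i0 hne
    have : toLex (a i, b i) < toLex (a i0, b i0) :=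
      lt_of_le_of_ne hle (by simpa using hne')
    rw [Prod.Lex.lt_iff] at this
    exact this
  have hF : ∀ t : ℝ, ∑ i ∈ s, d i *
      Real.exp ((a i - a i0) * t ^ 2 + (b i - b i0) * t) = 0 := by
    intro t
    have h0 := h t
    have hsum : ∑ i, d i * Real.exp (a i * t ^ 2 + b i * t)
        = ∑ i ∈ s, d i * Real.exp (a i * t ^ 2 + b i * t) := by
      refine (Finset.sum_subset (Finset.subset_univ s) ?_).symm
      intro i _ hi
      simp only [hs, Finset.mem_filter, Finset.mem_univ, true_and, not_not] at hi
      simp [hi]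
    have hE : Real.exp (a i0 * t ^ 2 + b i0 * t) ≠ 0 := Real.exp_ne_zero _
    have : (∑ i ∈ s, d i * Real.exp ((a i - a i0) * t ^ 2 + (b i - b i0) * t))
        * Real.exp (a i0 * t ^ 2 + b i0 * t) = 0 := by
      rw [Finset.sum_mul]
      rw [hsum] at h0
      rw [← h0]
      refine Finset.sum_congr rfl fun i _ => ?_
      rw [mul_assoc, ← Real.exp_add]
      ring_nf
    exact (mul_eq_zero.1 this).resolve_right hE
  have htend : Tendsto (fun t : ℝ => ∑ i ∈ s, d i *
      Real.exp ((a i - a i0) * t ^ 2 + (b i - b i0) * t)) atTop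
      (nhds (d i0)) := by
    have : Tendsto (fun t : ℝ => ∑ i ∈ s, d i *
        Real.exp ((a i - a i0) * t ^ 2 + (b i - b i0) * t)) atTop
        (nhds (∑ i ∈ s, if i = i0 then d i else 0)) := by
      refine tendsto_finset_sum _ fun i his => ?_
      by_cases hii : i = i0
      · subst hii
        simp only [if_pos rfl, sub_self, zero_mul, add_zero, Real.exp_zero]
        simpa using (tendsto_const_nhds : Tendsto (fun _ : ℝ => d i) atTop _)
      · rw [if_neg hii]
        have hcase := hlt i his hii
        have : Tendsto (fun t : ℝ => Real.exp ((a i - a i0) * t ^ 2 +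
            (b i - b i0) * t)) atTop (nhds 0) := by
          apply exp_quad_tendsto_zero
          rcases hcase with h1 | ⟨h1, h2⟩
          · exact Or.inl (by linarith)
          · exact Or.inr ⟨by linarith, by linarith⟩
        simpa using this.const_mul (d i)
    simpa [Finset.sum_ite_eq' s, hi0s] using this
  have : d i0 = 0 :=
    tendsto_nhds_unique ((tendsto_congr fun t => (hF t)).1 htend) tendsto_const_nhds
  have hi0ne : d i0 ≠ 0 := by
    simpa [hs] using hi0s
  exact hi0ne this

private noncomputable def quadPoly (m : ℕ) (B : Matrix (Fin m) (Fin m) ℝ) :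
    MvPolynomial (Fin m) ℝ :=
  ∑ k, ∑ l, MvPolynomial.C (B k l) * MvPolynomial.X k * MvPolynomial.X l

private noncomputable def linPoly (m : ℕ) (w : Fin m → ℝ) : MvPolynomial (Fin m) ℝ :=
  ∑ k, MvPolynomial.C (w k) * MvPolynomial.X k

private lemma eval_quadPoly (m : ℕ) (B : Matrix (Fin m) (Fin m) ℝ) (v : Fin m → ℝ) :
    MvPolynomial.eval v (quadPoly m B) = v ⬝ᵥ B.mulVec v := by
  simp only [quadPoly, dotProduct, Matrix.mulVec, Finset.mul_sum,
    map_sum]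
  refine Finset.sum_congr rfl fun k _ => Finset.sum_congr rfl fun l _ => by
    simp only [_root_.map_mul, eval_C, eval_X]; ring

private lemma eval_linPoly (m : ℕ) (w : Fin m → ℝ) (v : Fin m → ℝ) :
    MvPolynomial.eval v (linPoly m w) = w ⬝ᵥ v := by
  simp [linPoly, dotProduct]

private lemma isSymm_eq_zero_of_quad (m : ℕ) (B : Matrix (Fin m) (Fin m) ℝ)
    (hB : B.IsSymm) (h : ∀ v, v ⬝ᵥ B.mulVec v = 0) : B = 0 := by
  ext k l
  have hdiag : ∀ k, B k k = 0 := by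
    intro k
    have := h (Pi.single k 1)
    simpa [dotProduct, Matrix.mulVec, Pi.single_apply] using this
  by_cases hkl : k = l
  · subst hkl; simpa using hdiag k
  · have := h (Pi.single k 1 + Pi.single l 1)
    have hsym : B l k = B k l := by
      have := congrFun (congrFun hB k) l
      simpa [Matrix.IsSymm, Matrix.transpose_apply] using this
    simp [dotProduct, Matrix.mulVec, Pi.single_apply, mul_add, add_mul,
      Finset.sum_add_distrib, hkl, Ne.symm hkl, hdiag, hsym] at this
    simpa using this

/-- Existence of a direction separating finitely many pairs
(quadratic form, linear form). -/
private lemma exists_separating_direction (m r : ℕ)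
    (A : Fin r → Matrix (Fin m) (Fin m) ℝ) (w : Fin r → (Fin m → ℝ))
    (hA : ∀ i, (A i).IsSymm)
    (hd : ∀ i j : Fin r, i ≠ j → (A i, w i) ≠ (A j, w j)) :
    ∃ v : Fin m → ℝ, ∀ i j : Fin r, i ≠ j →
      (v ⬝ᵥ (A i).mulVec v, w i ⬝ᵥ v) ≠ (v ⬝ᵥ (A j).mulVec v, w j ⬝ᵥ v) := by
  classical
  set q : Fin r × Fin r → MvPolynomial (Fin m) ℝ := fun p =>
    if A p.1 = A p.2 then linPoly m (w p.1 - w p.2)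
    else quadPoly m (A p.1 - A p.2) with hq
  have hqne : ∀ p ∈ Finset.univ.offDiag, q p ≠ 0 := by
    rintro ⟨i, j⟩ hp
    simp only [Finset.mem_offDiag] at hp
    obtain ⟨-, -, hij⟩ := hp
    by_cases hAij : A i = A j
    · have hwij : w i - w j ≠ 0 := by
        intro h0
        exact hd i j hij (by
          have : w i = w j := sub_eq_zero.1 h0
          rw [hAij, this])
      simp only [hq, if_pos hAij]
      intro h0
      apply hwij
      have := congrArg (MvPolynomial.eval (w i - w j)) h0
      rw [eval_linPoly] at this
      simp only [map_zero] at this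
      exact (dotProduct_self_eq_zero).1 this
    · simp only [hq, if_neg hAij]
      intro h0
      apply hAij
      have hsub : (A i - A j).IsSymm := (hA i).sub (hA j)
      have : A i - A j = 0 := by
        apply isSymm_eq_zero_of_quad m _ hsub
        intro v
        have := congrArg (MvPolynomial.eval v) h0
        rw [eval_quadPoly] at this
        simpa using this
      exact sub_eq_zero.1 this
  have hP : (∏ p ∈ Finset.univ.offDiag, q p) ≠ 0 :=
    Finset.prod_ne_zero_iff.2 hqne
  have hv : ∃ v : Fin m → ℝ,
      MvPolynomial.eval v (∏ p ∈ Finset.univ.offDiag, q p) ≠ 0 := by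
    by_contra h0
    push_neg at h0
    exact hP (MvPolynomial.funext fun v => by simpa using h0 v)
  obtain ⟨v, hv⟩ := hv
  refine ⟨v, fun i j hij => ?_⟩
  have hpij : (i, j) ∈ Finset.univ.offDiag := by
    simp [Finset.mem_offDiag, hij]
  have hqv : MvPolynomial.eval v (q (i, j)) ≠ 0 := by
    intro h0
    apply hv
    rw [map_prod]
    exact Finset.prod_eq_zero hpij h0
  by_cases hAij : A i = A j
  · simp only [hq, if_pos hAij, eval_linPoly] at hqv
    intro hpair
    apply hqv
    have : w i ⬝ᵥ v = w j ⬝ᵥ v := (Prod.ext_iff.1 hpair).2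
    rw [sub_dotProduct, this, sub_self]
  · simp only [hq, if_neg hAij, eval_quadPoly] at hqv
    intro hpair
    apply hqv
    have : v ⬝ᵥ (A i).mulVec v = v ⬝ᵥ (A j).mulVec v := (Prod.ext_iff.1 hpair).1
    rw [Matrix.sub_mulVec, dotProduct_sub, this, sub_self]

private lemma symm_dot {m : ℕ} {A : Matrix (Fin m) (Fin m) ℝ} (hA : A.IsSymm)
    (x y : Fin m → ℝ) : x ⬝ᵥ A.mulVec y = y ⬝ᵥ A.mulVec x := by
  conv_lhs => rw [Matrix.dotProduct_mulVec, ← hA.eq, Matrix.vecMul_transpose]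
  exact dotProduct_comm _ _

private lemma line_expand {m : ℕ} {A : Matrix (Fin m) (Fin m) ℝ} (hA : A.IsSymm)
    (μ v : Fin m → ℝ) (t : ℝ) :
    (t • v - μ) ⬝ᵥ A.mulVec (t • v - μ)
      = (v ⬝ᵥ A.mulVec v) * t ^ 2 - 2 * (μ ⬝ᵥ A.mulVec v) * t
        + μ ⬝ᵥ A.mulVec μ := by
  have hcross : v ⬝ᵥ A.mulVec μ = μ ⬝ᵥ A.mulVec v := symm_dot hA v μ
  rw [sub_dotProduct, Matrix.mulVec_sub]
  simp only [dotProduct_sub, Matrix.mulVec_smul, smul_dotProduct,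
    dotProduct_smul, smul_eq_mul, hcross]
  ring

/-- The Gaussian probability density function on `ℝ^m` with mean `μ` and
covariance matrix `S`:
`g(x) = (2π)^{-m/2} det(S)^{-1/2} exp(-(x-μ)ᵀ S⁻¹ (x-μ) / 2)`. -/
noncomputable def gaussianPDF (m : ℕ) (μ : Fin m → ℝ) (S : Matrix (Fin m) (Fin m) ℝ)
    (x : Fin m → ℝ) : ℝ :=
  (2 * Real.pi) ^ (-(m : ℝ) / 2) * S.det ^ (-(1 : ℝ) / 2) *
    Real.exp (-(dotProduct (x - μ) (S⁻¹.mulVec (x - μ))) / 2)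

/-- Any finite family of pairwise distinct Gaussian probability density
functions on `ℝ^m` is linearly independent: if the parameter pairs
`(μ i, S i)` (means and symmetric positive definite covariance matrices)
are pairwise distinct and a real linear combination of the corresponding
densities vanishes identically, then all coefficients vanish. -/
theorem gaussianPDF_linearIndependent
    (m r : ℕ) (μ : Fin r → (Fin m → ℝ)) (S : Fin r → Matrix (Fin m) (Fin m) ℝ)
    (hsymm : ∀ i, (S i).IsSymm) (hpos : ∀ i, (S i).PosDef)
    (hdist : ∀ i j, i ≠ j → (μ i, S i) ≠ (μ j, S j))
    (c : Fin r → ℝ)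
    (hzero : ∀ x : Fin m → ℝ, ∑ i, c i * gaussianPDF m (μ i) (S i) x = 0) :
    ∀ i, c i = 0 := by
  classical
  set A : Fin r → Matrix (Fin m) (Fin m) ℝ := fun i => (S i)⁻¹ with hAdef
  have hSunit : ∀ i, IsUnit (S i).det := fun i => (hpos i).det_pos.ne'.isUnit
  have hApos : ∀ i, (A i).PosDef := fun i => (hpos i).inv
  have hAunit : ∀ i, IsUnit (A i).det := fun i => (hApos i).det_pos.ne'.isUnit
  have hAsymm : ∀ i, (A i).IsSymm := fun i => by
    show ((S i)⁻¹)ᵀ = (S i)⁻¹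
    rw [Matrix.transpose_nonsing_inv, (hsymm i).eq]
  set w : Fin r → (Fin m → ℝ) := fun i => (A i).mulVec (μ i) with hwdef
  have hAw : ∀ i j : Fin r, i ≠ j → (A i, w i) ≠ (A j, w j) := by
    intro i j hij h
    obtain ⟨hA, hw⟩ := Prod.ext_iff.1 h
    dsimp only at hA hw
    have hS : S i = S j := by
      have h2 : ((S i)⁻¹)⁻¹ = ((S j)⁻¹)⁻¹ := congrArg Inv.inv hA
      rwa [Matrix.nonsing_inv_nonsing_inv _ (hSunit i),
        Matrix.nonsing_inv_nonsing_inv _ (hSunit j)] at h2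
    have hμ : μ i = μ j := by
      have h1 : (A i)⁻¹.mulVec (w i) = μ i := by
        rw [hwdef, Matrix.mulVec_mulVec, Matrix.nonsing_inv_mul _ (hAunit i),
          Matrix.one_mulVec]
      have h2 : (A j)⁻¹.mulVec (w j) = μ j := by
        rw [hwdef, Matrix.mulVec_mulVec, Matrix.nonsing_inv_mul _ (hAunit j),
          Matrix.one_mulVec]
      rw [← h1, ← h2, hA, hw]
    exact hdist i j hij (by rw [hμ, hS])
  obtain ⟨v, hv⟩ := exists_separating_direction m r A w hAsymm hAw
  set a : Fin r → ℝ := fun i => -(v ⬝ᵥ (A i).mulVec v) / 2 with hadef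
  set b : Fin r → ℝ := fun i => w i ⬝ᵥ v with hbdef
  set K : Fin r → ℝ := fun i =>
    (2 * Real.pi) ^ (-(m : ℝ) / 2) * (S i).det ^ (-(1 : ℝ) / 2) *
      Real.exp (-(μ i ⬝ᵥ (A i).mulVec (μ i)) / 2) with hKdef
  have hK : ∀ i, 0 < K i := by
    intro i
    have h1 : (0 : ℝ) < (2 * Real.pi) ^ (-(m : ℝ) / 2) :=
      Real.rpow_pos_of_pos (by positivity) _
    have h2 : (0 : ℝ) < (S i).det ^ (-(1 : ℝ) / 2) :=
      Real.rpow_pos_of_pos (hpos i).det_pos _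
    positivity
  have hb : ∀ i, b i = μ i ⬝ᵥ (A i).mulVec v := by
    intro i
    rw [hbdef]
    show (A i).mulVec (μ i) ⬝ᵥ v = μ i ⬝ᵥ (A i).mulVec v
    rw [dotProduct_comm]
    exact symm_dot (hAsymm i) v (μ i)
  have hgauss : ∀ i (t : ℝ), gaussianPDF m (μ i) (S i) (t • v)
      = K i * Real.exp (a i * t ^ 2 + b i * t) := by
    intro i t
    show (2 * Real.pi) ^ (-(m : ℝ) / 2) * (S i).det ^ (-(1 : ℝ) / 2) *
        Real.exp (-((t • v - μ i) ⬝ᵥ (A i).mulVec (t • v - μ i)) / 2) = _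
    rw [line_expand (hAsymm i) (μ i) v t, hKdef]
    simp only [mul_assoc, ← Real.exp_add]
    congr 2
    rw [hadef, hb i]
    ring
  have hzero' : ∀ t : ℝ, ∑ i, (c i * K i) * Real.exp (a i * t ^ 2 + b i * t) = 0 := by
    intro t
    rw [← hzero (t • v)]
    exact Finset.sum_congr rfl fun i _ => by rw [hgauss i t]; ring
  have hdistab : ∀ i j : Fin r, i ≠ j → (a i, b i) ≠ (a j, b j) := by
    intro i j hij hpair
    obtain ⟨ha, hbij⟩ := Prod.ext_iff.1 hpair
    apply hv i j hij
    have haa : v ⬝ᵥ (A i).mulVec v = v ⬝ᵥ (A j).mulVec v := by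
      have := ha
      simp only [hadef] at this
      linarith
    exact Prod.ext_iff.2 ⟨haa, hbij⟩
  have hdzero := key1d r a b (fun i => c i * K i) hdistab hzero'
  intro i
  have := hdzero i
  exact (mul_eq_zero.1 this).resolve_right (hK i).ne'
end

section
/- If S ⊆ ℝ^m is a Lebesgue-measurable set that is star-shaped about the origin and whose Lebesgue measure is positive and finite, then the function σ ↦ P(σZ ∈ S) is strictly decreasing on (0, ∞): for all 0 < σ < σ′, P(σ′Z ∈ S) < P(σZ ∈ S). -/
open MeasureTheory ProbabilityTheory

lemma pi_ac_aux {n : ℕ} (μ ν : Fin n → Measure ℝ)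
    [∀ i, SigmaFinite (μ i)] [∀ i, SigmaFinite (ν i)]
    (h : ∀ i, μ i ≪ ν i) : Measure.pi μ ≪ Measure.pi ν := by
  induction n with
  | zero =>
    rw [Measure.pi_of_empty, Measure.pi_of_empty]
  | succ n ih =>
    have h1 := measurePreserving_piFinSuccAbove μ 0
    have h2 := measurePreserving_piFinSuccAbove ν 0
    rw [← (h1.symm _).map_eq, ← (h2.symm _).map_eq]
    exact ((h 0).prod (ih _ _ (fun i => h _))).map
      (MeasurableEquiv.piFinSuccAbove (fun _ : Fin (n+1) => ℝ) 0).symm.measurable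

/-- Let `Z` be a standard Gaussian random vector on `ℝ^m` (i.i.d. standard
normal coordinates, i.e. mean `0` and identity covariance).  If `S ⊆ ℝ^m` is a
Lebesgue-measurable set, star-shaped about the origin, with positive and
finite Lebesgue measure, then `σ ↦ P(σZ ∈ S)` is strictly decreasing on
`(0, ∞)`. -/
theorem gaussian_prob_starShaped_strictAnti
    {Ω : Type*} [MeasurableSpace Ω] (P : Measure Ω) [IsProbabilityMeasure P]
    (m : ℕ) (hm : 0 < m) (Z : Ω → (Fin m → ℝ))
    (hZmeas : ∀ i, Measurable fun ω => Z ω i)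
    (hZdist : ∀ i, Measure.map (fun ω => Z ω i) P = gaussianReal 0 1)
    (hZindep : iIndepFun (fun i ω => Z ω i) P)
    (S : Set (Fin m → ℝ)) (hSmeas : MeasurableSet S)
    (hstar : ∀ x ∈ S, ∀ lam : ℝ, lam ∈ Set.Ioo (0 : ℝ) 1 → lam • x ∈ S)
    (hpos : 0 < volume S) (hfin : volume S < ⊤) :
    ∀ σ σ' : ℝ, 0 < σ → σ < σ' →
      P {ω | σ' • Z ω ∈ S} < P {ω | σ • Z ω ∈ S} := by
  intro σ σ' hσ hσσ'
  have hσ' : 0 < σ' := hσ.trans hσσ'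
  have hZm : Measurable Z := measurable_pi_lambda _ hZmeas
  set γ : Measure (Fin m → ℝ) := Measure.pi (fun _ : Fin m => gaussianReal 0 1) with hγdef
  -- the law of Z is the standard Gaussian product measure
  have hmap : Measure.map Z P = γ := by
    refine (Measure.pi_eq fun s hs => ?_).symm
    rw [Measure.map_apply hZm (MeasurableSet.univ_pi hs)]
    have hpre : Z ⁻¹' Set.pi Set.univ s = ⋂ i ∈ Finset.univ, (fun ω => Z ω i) ⁻¹' s i := by
      ext ω
      simp [Set.mem_pi]
    rw [hpre, hZindep.measure_inter_preimage_eq_mul Finset.univ (fun i _ => hs i)]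
    refine Finset.prod_congr rfl fun i _ => ?_
    rw [← hZdist i, Measure.map_apply (hZmeas i) (hs i)]
  -- the sets
  set A : Set (Fin m → ℝ) := (σ • ·) ⁻¹' S with hA
  set B : Set (Fin m → ℝ) := (σ' • ·) ⁻¹' S with hB
  have hAm : MeasurableSet A := hSmeas.preimage (measurable_const_smul σ)
  have hBm : MeasurableSet B := hSmeas.preimage (measurable_const_smul σ')
  have hBA : B ⊆ A := by
    intro x hx
    have h1 : σ / σ' ∈ Set.Ioo (0:ℝ) 1 := ⟨div_pos hσ hσ', (div_lt_one hσ').2 hσσ'⟩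
    have := hstar _ hx _ h1
    simpa [hA, smul_smul, div_mul_cancel₀ _ hσ'.ne'] using this
  -- rewrite the probabilities through the law
  have hPA : P {ω | σ • Z ω ∈ S} = γ A := by
    rw [← hmap, Measure.map_apply hZm hAm]; rfl
  have hPB : P {ω | σ' • Z ω ∈ S} = γ B := by
    rw [← hmap, Measure.map_apply hZm hBm]; rfl
  rw [hPA, hPB]
  -- volume of A \ B is positive
  have hrank : Module.finrank ℝ (Fin m → ℝ) = m := Module.finrank_fin_fun ℝ
  have hvolA : volume A = ENNReal.ofReal ((σ ^ m)⁻¹) * volume S := by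
    rw [hA, Measure.addHaar_preimage_smul volume hσ.ne' S, hrank,
      abs_of_pos (by positivity)]
  have hvolB : volume B = ENNReal.ofReal ((σ' ^ m)⁻¹) * volume S := by
    rw [hB, Measure.addHaar_preimage_smul volume hσ'.ne' S, hrank,
      abs_of_pos (by positivity)]
  have hvollt : volume B < volume A := by
    rw [hvolA, hvolB]
    refine ENNReal.mul_lt_mul_left hpos.ne' hfin.ne ?_
    refine ENNReal.ofReal_lt_ofReal_iff_of_nonneg (by positivity) |>.2 ?_
    exact inv_strictAnti₀ (by positivity) (pow_lt_pow_left₀ hσσ' hσ.le hm.ne')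
  have hvolBfin : volume B ≠ ⊤ := by
    rw [hvolB]; exact ENNReal.mul_ne_top ENNReal.ofReal_ne_top hfin.ne
  have hdiffpos : 0 < volume (A \ B) := by
    have := measure_diff hBA hBm.nullMeasurableSet hvolBfin
    rw [this]
    exact tsub_pos_of_lt hvollt
  -- positivity under the Gaussian measure
  have hac : (volume : Measure (Fin m → ℝ)) ≪ γ := by
    rw [volume_pi]
    exact pi_ac_aux _ _ (fun _ => gaussianReal_absolutelyContinuous' 0 one_ne_zero)
  have hγdiffpos : 0 < γ (A \ B) := by
    by_contra h
    push_neg at h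
    have h0 : γ (A \ B) = 0 := le_antisymm h bot_le
    exact absurd (hac h0) hdiffpos.ne'
  -- conclude
  have : γ B + γ (A \ B) = γ A := by
    rw [← measure_union (disjoint_sdiff_self_right) (hAm.diff hBm), Set.union_diff_cancel hBA]
  calc γ B < γ B + γ (A \ B) := ENNReal.lt_add_right (measure_ne_top γ B) hγdiffpos.ne'
    _ = γ A := this
end
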